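/- For all positive integers n and k, there exists a positive integer N such that the following holds. Let U be a set of k direction vectors in the plane and let J_U be the set of all line segments in the plane parallel to some direction in U. Then any N families, each consisting of n pairwise disjoint segments in J_U, admit a system of disjoint representatives of size n. -/

import Mathlib

open Set

noncomputable section

abbrev Pt := ℝ × ℝ

/-- The line through `p` with direction `u`. -/
def lineD (p u : Pt) : Set Pt := {x | ∃ t : ℝ, x = t • u + p}

lemma self_mem_lineD (p u : Pt) : p ∈ lineD p u := ⟨0, by module⟩

lemma seg_subset_lineD {u v : Pt} {s t : ℝ} {q : Pt}
    (hq : q ∈ (fun r : ℝ => r • u + v) '' Icc s t) :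
    (fun r : ℝ => r • u + v) '' Icc s t ⊆ lineD q u := by
  rintro x ⟨r, _, rfl⟩
  rcases hq with ⟨r0, _, rfl⟩
  exact ⟨r - r0, by module⟩

lemma lineD_eq_of_mem {p u q : Pt} (hq : q ∈ lineD p u) : lineD q u = lineD p u := by
  rcases hq with ⟨t0, rfl⟩
  ext x
  constructor
  · rintro ⟨t, rfl⟩; exact ⟨t + t0, by module⟩
  · rintro ⟨t, rfl⟩; exact ⟨t - t0, by module⟩

lemma lineD_smul {p u : Pt} {c : ℝ} (hc : c ≠ 0) : lineD p (c • u) = lineD p u := by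
  ext x
  constructor
  · rintro ⟨t, rfl⟩; exact ⟨t * c, by rw [smul_smul]⟩
  · rintro ⟨t, rfl⟩; exact ⟨t / c, by rw [smul_smul, div_mul_cancel₀ _ hc]⟩

lemma lineD_injective_param {u : Pt} (hu : u ≠ 0) (p : Pt) :
    Function.Injective (fun t : ℝ => t • u + p) := by
  intro a b hab
  have hab' : a • u = b • u := by
    have := add_right_cancel (hab : a • u + p = b • u + p)
    exact this
  have h : (a - b) • u = 0 := by rw [sub_smul, hab', sub_self]
  rcases smul_eq_zero.mp h with h' | h'
  · exact sub_eq_zero.mp h'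
  · exact absurd h' hu

lemma lineD_eq_lineD {u w z₁ z₂ p q : Pt} (hu : u ≠ 0) (hw : w ≠ 0)
    (h1u : z₁ ∈ lineD p u) (h1w : z₁ ∈ lineD q w)
    (h2u : z₂ ∈ lineD p u) (h2w : z₂ ∈ lineD q w) (hne : z₁ ≠ z₂) :
    lineD p u = lineD q w := by
  have e1 : lineD p u = lineD z₁ u := (lineD_eq_of_mem h1u).symm
  have e2 : lineD q w = lineD z₁ w := (lineD_eq_of_mem h1w).symm
  -- z₂ - z₁ is a nonzero multiple of u and of w
  have h2u' : z₂ ∈ lineD z₁ u := e1 ▸ h2u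
  have h2w' : z₂ ∈ lineD z₁ w := e2 ▸ h2w
  rcases h2u' with ⟨t, ht⟩
  rcases h2w' with ⟨t', ht'⟩
  have htne : t ≠ 0 := by
    rintro rfl
    have h' : z₂ = z₁ := by simpa using ht
    exact hne h'.symm
  have htne' : t' ≠ 0 := by
    rintro rfl
    have h' : z₂ = z₁ := by simpa using ht'
    exact hne h'.symm
  have hzu : z₂ - z₁ = t • u := by rw [ht]; module
  have hzw : z₂ - z₁ = t' • w := by rw [ht']; module
  calc lineD p u = lineD z₁ u := e1
    _ = lineD z₁ (t • u) := (lineD_smul htne).symm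
    _ = lineD z₁ (z₂ - z₁) := by rw [hzu]
    _ = lineD z₁ (t' • w) := by rw [hzw]
    _ = lineD z₁ w := lineD_smul htne'
    _ = lineD q w := e2.symm

lemma icc_image_unit {s t : ℝ} (h : s ≤ t) :
    (fun θ : ℝ => s + θ * (t - s)) '' Icc 0 1 = Icc s t := by
  ext x
  constructor
  · rintro ⟨θ, ⟨h0, h1⟩, rfl⟩
    dsimp only
    constructor <;> nlinarith
  · rintro ⟨hx1, hx2⟩
    rcases eq_or_lt_of_le h with rfl | hlt
    · refine ⟨0, ⟨le_rfl, zero_le_one⟩, ?_⟩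
      have : x = s := le_antisymm hx2 hx1
      simp [this]
    · refine ⟨(x - s) / (t - s), ⟨div_nonneg (by linarith) (by linarith), ?_⟩, ?_⟩
      · rw [div_le_one (by linarith)]; linarith
      · dsimp only
        rw [div_mul_cancel₀ _ (by linarith : t - s ≠ 0)]
        ring

/-- convex combination parametrization of a segment image -/
lemma image_param {E1 E2 : Pt} {s t : ℝ} (hst : s ≤ t) {w v : Pt}
    (hE1 : E1 = s • w + v) (hE2 : E2 = t • w + v) :
    (fun r : ℝ => r • w + v) '' Icc s t
      = (fun θ : ℝ => (1 - θ) • E1 + θ • E2) '' Icc 0 1 := by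
  conv_lhs => rw [← icc_image_unit hst]
  rw [Set.image_image]
  apply Set.image_congr
  intro θ _
  subst hE1 hE2
  module

lemma cvx_comm (E1 E2 : Pt) :
    (fun θ : ℝ => (1 - θ) • E1 + θ • E2) '' Icc (0:ℝ) 1
      = (fun θ : ℝ => (1 - θ) • E2 + θ • E1) '' Icc (0:ℝ) 1 := by
  ext x
  constructor
  · rintro ⟨θ, ⟨h0, h1⟩, rfl⟩
    refine ⟨1 - θ, ⟨?_, ?_⟩, ?_⟩
    · linarith
    · linarith
    · module
  · rintro ⟨θ, ⟨h0, h1⟩, rfl⟩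
    refine ⟨1 - θ, ⟨?_, ?_⟩, ?_⟩
    · linarith
    · linarith
    · module

/-- A segment contained in a line `lineD p u` can be re-parametrized along `u`. -/
lemma seg_on_line {w v p u : Pt} (hu : u ≠ 0) {s t : ℝ} (hst : s ≤ t)
    (hsub : (fun r : ℝ => r • w + v) '' Icc s t ⊆ lineD p u) :
    ∃ a b : ℝ, a ≤ b ∧
      (fun r : ℝ => r • w + v) '' Icc s t = (fun r : ℝ => r • u + p) '' Icc a b := by
  have hE1 : s • w + v ∈ lineD p u := hsub ⟨s, ⟨le_rfl, hst⟩, rfl⟩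
  have hE2 : t • w + v ∈ lineD p u := hsub ⟨t, ⟨hst, le_rfl⟩, rfl⟩
  rcases hE1 with ⟨a₁, ha₁⟩
  rcases hE2 with ⟨a₂, ha₂⟩
  have hseg : (fun r : ℝ => r • w + v) '' Icc s t
      = (fun θ : ℝ => (1 - θ) • (s • w + v) + θ • (t • w + v)) '' Icc 0 1 :=
    image_param hst rfl rfl
  rcases le_total a₁ a₂ with hle | hle
  · refine ⟨a₁, a₂, hle, ?_⟩
    rw [hseg, image_param hle rfl rfl, ha₁, ha₂]
  · refine ⟨a₂, a₁, hle, ?_⟩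
    rw [hseg, image_param hle rfl rfl, ha₁, ha₂, cvx_comm]

lemma interval_sep {a b c d x y : ℝ} (hd : Disjoint (Icc a b) (Icc c d))
    (hx : x ∈ Icc a b) (hy : y ∈ Icc c d) (hxy : x < y) : b < c := by
  by_contra h
  push_neg at h
  have hmem1 : max a c ∈ Icc a b := ⟨le_max_left _ _, max_le (le_trans hx.1 hx.2) h⟩
  have hmem2 : max a c ∈ Icc c d := ⟨le_max_right _ _, max_le (by linarith [hx.1, hy.2]) (le_trans hy.1 hy.2)⟩
  exact Set.disjoint_left.mp hd hmem1 hmem2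


lemma lex_pair_lt_of_lt {A B : Type*} [LT A] [LT B] {a a' : A} {b b' : B} (h : a < a') :
    toLex (a, b) < toLex (a', b') := Prod.Lex.lt_iff.mpr (Or.inl h)

lemma lex_pair_lt_of_eq {A B : Type*} [LT A] [LT B] {a a' : A} {b b' : B}
    (h1 : a = a') (h2 : b < b') :
    toLex (a, b) < toLex (a', b') := Prod.Lex.lt_iff.mpr (Or.inr ⟨h1, h2⟩)

lemma exists_lt_fiber {α C : Type*} [Fintype C] [DecidableEq C] (s : Finset α)
    (g : α → C) (M : ℕ) (h : Fintype.card C * M < s.card) :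
    ∃ c : C, M < (s.filter fun a => g a = c).card := by
  by_contra hno
  push_neg at hno
  have hsum := Finset.card_eq_sum_card_fiberwise
    (f := g) (s := s) (t := Finset.univ) (fun x _ => Finset.mem_univ _)
  have hle : s.card ≤ ∑ _c ∈ (Finset.univ : Finset C), M :=
    hsum ▸ Finset.sum_le_sum (fun c _ => hno c)
  rw [Finset.sum_const, Finset.card_univ, smul_eq_mul] at hle
  omega

lemma preHomog {C : Type} [Fintype C] (f : ℕ → ℕ → C) :
    ∀ (L : ℕ) (S : Finset ℕ), (Fintype.card C + 1) ^ L ≤ S.card →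
      ∃ (v : Fin L → ℕ) (cs : Fin L → C), StrictMono v ∧ (∀ i, v i ∈ S) ∧
        ∀ i j : Fin L, i < j → f (v i) (v j) = cs i := by
  classical
  intro L
  induction L with
  | zero =>
    intro S _
    exact ⟨Fin.elim0, Fin.elim0, fun a => a.elim0, fun a => a.elim0, fun a => a.elim0⟩
  | succ L IH =>
    intro S hS
    set B := Fintype.card C + 1 with hB
    have hB1 : 1 ≤ B := by omega
    have hq1 : 1 ≤ B ^ L := Nat.one_le_pow _ _ (by omega)
    have hSne : S.Nonempty := Finset.card_pos.mp (by
      have : 0 < B ^ (L + 1) := pow_pos (by omega) _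
      omega)
    set v₀ := S.min' hSne with hv₀
    set T := S.erase v₀ with hT
    have hTcard : T.card = S.card - 1 := Finset.card_erase_of_mem (S.min'_mem hSne)
    have hfiber : ∃ c : C, B ^ L - 1 < (T.filter fun z => f v₀ z = c).card := by
      apply exists_lt_fiber
      -- Fintype.card C * (B ^ L - 1) < T.card
      have hCcard : 1 ≤ Fintype.card C := @Fintype.card_pos _ _ ⟨f 0 0⟩
      have hpow : B ^ (L + 1) = Fintype.card C * B ^ L + B ^ L := by
        rw [pow_succ, hB]; ring
      have hmul : Fintype.card C * (B ^ L - 1) + Fintype.card C = Fintype.card C * B ^ L := by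
        have h1 : (B ^ L - 1) + 1 = B ^ L := by omega
        calc Fintype.card C * (B ^ L - 1) + Fintype.card C
            = Fintype.card C * ((B ^ L - 1) + 1) := by ring
          _ = Fintype.card C * B ^ L := by rw [h1]
      omega
    obtain ⟨c₀, hc₀⟩ := hfiber
    have hc₀' : B ^ L ≤ ((T.filter fun z => f v₀ z = c₀)).card := by omega
    obtain ⟨v, cs, hvmono, hvmem, hvpat⟩ := IH (T.filter fun z => f v₀ z = c₀) hc₀'
    have hvS : ∀ i, v i ∈ S ∧ v₀ < v i := by
      intro i
      have h1 := hvmem i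
      rw [Finset.mem_filter] at h1
      have h2 := Finset.mem_erase.mp h1.1
      exact ⟨h2.2, lt_of_le_of_ne (S.min'_le _ h2.2) (Ne.symm h2.1)⟩
    refine ⟨Fin.cases v₀ v, Fin.cases c₀ cs, ?_, ?_, ?_⟩
    · intro a b hab
      rcases Fin.eq_zero_or_eq_succ b with rfl | ⟨j, rfl⟩
      · exact absurd hab (Fin.not_lt_zero _)
      · rcases Fin.eq_zero_or_eq_succ a with rfl | ⟨i, rfl⟩
        · simpa using (hvS j).2
        · simpa using hvmono (by exact_mod_cast Fin.succ_lt_succ_iff.mp hab)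
    · intro i
      rcases Fin.eq_zero_or_eq_succ i with rfl | ⟨j, rfl⟩
      · simpa using S.min'_mem hSne
      · simpa using (hvS j).1
    · intro i j hij
      rcases Fin.eq_zero_or_eq_succ j with rfl | ⟨j', rfl⟩
      · exact absurd hij (Fin.not_lt_zero _)
      · rcases Fin.eq_zero_or_eq_succ i with rfl | ⟨i', rfl⟩
        · simp only [Fin.cases_zero, Fin.cases_succ]
          have := hvmem j'
          rw [Finset.mem_filter] at this
          exact this.2
        · simp only [Fin.cases_succ]
          exact hvpat i' j' (by exact_mod_cast Fin.succ_lt_succ_iff.mp hij)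

lemma ramsey_seq {C : Type} [Fintype C] (m : ℕ) (f : ℕ → ℕ → C) (S : Finset ℕ)
    (hS : (Fintype.card C + 1) ^ (Fintype.card C * m + 1) ≤ S.card) :
    ∃ (w : Fin m → ℕ) (c : C), StrictMono w ∧ (∀ i, w i ∈ S) ∧
      ∀ a b : Fin m, a < b → f (w a) (w b) = c := by
  classical
  obtain ⟨v, cs, hvmono, hvmem, hvpat⟩ := preHomog f (Fintype.card C * m + 1) S hS
  have hfib : ∃ c : C, m - 1 < ((Finset.univ : Finset (Fin (Fintype.card C * m + 1))).filter
      fun i => cs i = c).card := by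
    apply exists_lt_fiber
    rw [Finset.card_univ, Fintype.card_fin]
    have : Fintype.card C * (m - 1) ≤ Fintype.card C * m :=
      Nat.mul_le_mul_left _ (Nat.sub_le _ _)
    omega
  obtain ⟨c, hc⟩ := hfib
  have hc' : m ≤ ((Finset.univ : Finset (Fin (Fintype.card C * m + 1))).filter
      fun i => cs i = c).card := by omega
  obtain ⟨B', hB'sub, hB'card⟩ := Finset.exists_subset_card_eq hc'
  have e := B'.orderIsoOfFin hB'card
  refine ⟨fun a => v (e a).1, c, ?_, fun a => hvmem _, ?_⟩
  · intro a b hab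
    exact hvmono (by exact_mod_cast (e.lt_iff_lt.mpr hab))
  · intro a b hab
    have h1 : ((e a : Fin (Fintype.card C * m + 1))) < e b := by
      exact_mod_cast e.lt_iff_lt.mpr hab
    rw [hvpat _ _ h1]
    have hmem : (e a : Fin (Fintype.card C * m + 1)) ∈ B' := (e a).2
    have := Finset.mem_filter.mp (hB'sub hmem)
    exact this.2

theorem sdr_aux (n k : ℕ) (hn : 0 < n) (hk : 0 < k) (N : ℕ)
    (hNge : k ^ n * (Fintype.card (Fin n → Fin n → Bool) + 1) ^
      (Fintype.card (Fin n → Fin n → Bool) * (n + 3) + 1) ≤ N)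
    (U : Finset (ℝ × ℝ)) (hU : U.card = k) (hUne : ∀ u ∈ U, u ≠ 0)
    (F : Fin N → Fin n → Set (ℝ × ℝ))
    (hFs : ∀ x b, ∃ u ∈ U, ∃ v : ℝ × ℝ, ∃ s t : ℝ, s ≤ t ∧
        F x b = (fun r : ℝ => r • u + v) '' Set.Icc s t)
    (hFdisj : ∀ x, ∀ b b', b ≠ b' → Disjoint (F x b) (F x b')) :
    ∃ (P : Fin n → Fin N) (g : Fin n → Fin n),
      Function.Injective P ∧
      ∀ j j' : Fin n, j ≠ j' → Disjoint (F (P j) (g j)) (F (P j') (g j')) := by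
  classical
  choose uF huF vF sF tF hst hFeq using hFs
  set RS := (Fintype.card (Fin n → Fin n → Bool) + 1) ^
      (Fintype.card (Fin n → Fin n → Bool) * (n + 3) + 1) with hRSdef
  have hRS1 : 1 ≤ RS := Nat.one_le_pow _ _ (by omega)
  have hkn : 1 ≤ k ^ n := Nat.one_le_pow _ _ hk
  -- pigeonhole on the direction pattern
  set dmapp : Fin N → (Fin n → {u : ℝ × ℝ // u ∈ U}) :=
    (fun x b => ⟨uF x b, huF x b⟩) with hdmapp
  have hDcard : Fintype.card (Fin n → {u : ℝ × ℝ // u ∈ U}) = k ^ n := by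
    rw [Fintype.card_fun]
    simp [hU]
  have hfib : ∃ d : (Fin n → {u : ℝ × ℝ // u ∈ U}),
      RS - 1 < ((Finset.univ : Finset (Fin N)).filter fun x => dmapp x = d).card := by
    apply exists_lt_fiber
    rw [Finset.card_univ, Fintype.card_fin, hDcard]
    have h1 : k ^ n * (RS - 1) + k ^ n = k ^ n * RS := by
      have h2 : (RS - 1) + 1 = RS := by omega
      calc k ^ n * (RS - 1) + k ^ n = k ^ n * ((RS - 1) + 1) := by ring
        _ = k ^ n * RS := by rw [h2]
    omega
  obtain ⟨dpat, hdpat⟩ := hfib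
  set A := (Finset.univ : Finset (Fin N)).filter (fun x => dmapp x = dpat) with hA
  have hAcard : RS ≤ A.card := by omega
  set dv : Fin n → ℝ × ℝ := fun b => (dpat b : ℝ × ℝ) with hdv
  have hdv0 : ∀ b, dv b ≠ 0 := fun b => hUne _ (dpat b).2
  -- Ramsey on the intersection pattern
  set colorFn : Fin N → Fin N → (Fin n → Fin n → Bool) := (fun x z i j =>
    if Disjoint (F x i) (F z j) then true else false) with hcolorFn
  set f : ℕ → ℕ → (Fin n → Fin n → Bool) := (fun a b =>
    if h : a < N ∧ b < N then colorFn ⟨a, h.1⟩ ⟨b, h.2⟩ else (fun _ _ => true)) with hf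
  set S := A.image (fun x : Fin N => (x : ℕ)) with hS
  have hScard : (Fintype.card (Fin n → Fin n → Bool) + 1) ^
      (Fintype.card (Fin n → Fin n → Bool) * (n + 3) + 1) ≤ S.card := by
    rw [hS, Finset.card_image_of_injective _ Fin.val_injective]
    exact hAcard
  obtain ⟨w, cpat, hwmono, hwmem, hwpat⟩ := ramsey_seq (n + 3) f S hScard
  have hyex : ∀ a : Fin (n + 3), ∃ x : Fin N, x ∈ A ∧ (x : ℕ) = w a := by
    intro a
    have h1 := hwmem a
    rw [hS, Finset.mem_image] at h1
    obtain ⟨x, hx1, hx2⟩ := h1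
    exact ⟨x, hx1, hx2⟩
  choose y hyA hyval using hyex
  have hyinj : Function.Injective y := by
    intro a b hab
    have h1 : w a = w b := by rw [← hyval a, ← hyval b, hab]
    exact hwmono.injective h1
  have hpat : ∀ a b : Fin (n + 3), a < b → colorFn (y a) (y b) = cpat := by
    intro a b hab
    have h1 := hwpat a b hab
    have hbnd : w a < N ∧ w b < N := ⟨hyval a ▸ (y a).isLt, hyval b ▸ (y b).isLt⟩
    rw [hf] at h1
    simp only at h1
    rw [dif_pos hbnd] at h1
    have hya : (⟨w a, hbnd.1⟩ : Fin N) = y a := Fin.ext (hyval a).symm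
    have hyb : (⟨w b, hbnd.2⟩ : Fin N) = y b := Fin.ext (hyval b).symm
    rw [hya, hyb] at h1
    exact h1
  have hdisjY : ∀ (a b : Fin (n + 3)) (i j : Fin n), a < b → cpat i j = true →
      Disjoint (F (y a) i) (F (y b) j) := by
    intro a b i j hab hc
    have h1 := congrFun (congrFun (hpat a b hab) i) j
    by_cases h : Disjoint (F (y a) i) (F (y b) j)
    · exact h
    · exfalso
      rw [hc, hcolorFn] at h1
      simp only [if_neg h] at h1
      exact absurd h1 (by decide)
  have hmeetY : ∀ (a b : Fin (n + 3)) (i j : Fin n), a < b → cpat i j = false →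
      ∃ q, q ∈ F (y a) i ∧ q ∈ F (y b) j := by
    intro a b i j hab hc
    have h1 := congrFun (congrFun (hpat a b hab) i) j
    rw [hc, hcolorFn] at h1
    by_cases h : Disjoint (F (y a) i) (F (y b) j)
    · exfalso
      simp only [if_pos h] at h1
      exact absurd h1 (by decide)
    · exact Set.not_disjoint_iff.mp h
  have hFsegY : ∀ (a : Fin (n + 3)) (i : Fin n),
      F (y a) i = (fun r : ℝ => r • dv i + vF (y a) i) '' Set.Icc (sF (y a) i) (tF (y a) i) := by
    intro a i
    have hmem := (Finset.mem_filter.mp (by rw [← hA]; exact hyA a)).2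
    have h2 : uF (y a) i = dv i := by
      have h3 := congrFun hmem i
      rw [hdv]
      exact congrArg Subtype.val h3
    rw [hFeq (y a) i, h2]
  have hnm : n ≤ n + 3 := by omega
  set A0 : Fin (n + 3) := ⟨0, by omega⟩ with hA0
  set A1 : Fin (n + 3) := ⟨1, by omega⟩ with hA1
  set A2 : Fin (n + 3) := ⟨2, by omega⟩ with hA2
  have h01 : A0 < A1 := by rw [hA0, hA1]; exact Fin.mk_lt_mk.mpr (by omega)
  have h12 : A1 < A2 := by rw [hA1, hA2]; exact Fin.mk_lt_mk.mpr (by omega)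
  have hcastlt : ∀ {j j' : Fin n}, j < j' → Fin.castLE hnm j < Fin.castLE hnm j' := by
    intro j j' h
    rw [Fin.lt_def] at h ⊢
    simpa using h
  by_cases hAcase : ∃ i, cpat i i = true
  · obtain ⟨i, hi⟩ := hAcase
    refine ⟨fun a => y (Fin.castLE hnm a), fun _ => i, ?_, ?_⟩
    · intro a b hab
      exact Fin.castLE_injective hnm (hyinj hab)
    · intro j j' hjj'
      rcases lt_or_gt_of_ne hjj' with h | h
      · exact hdisjY _ _ i i (hcastlt h) hi
      · exact (hdisjY _ _ i i (hcastlt h) hi).symm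
  · push_neg at hAcase
    have hdiag : ∀ i, cpat i i = false := by
      intro i
      rcases Bool.eq_false_or_eq_true (cpat i i) with h | h
      · exact absurd h (hAcase i)
      · exact h
    have hpex : ∀ i, ∃ q, q ∈ F (y A0) i ∧ q ∈ F (y A1) i :=
      fun i => hmeetY A0 A1 i i h01 (hdiag i)
    choose p hp0 hp1 using hpex
    have hsub : ∀ (i : Fin n) (a : Fin (n + 3)), F (y a) i ⊆ lineD (p i) (dv i) := by
      intro i a
      have hs0 : F (y A0) i ⊆ lineD (p i) (dv i) := by
        rw [hFsegY A0 i]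
        exact seg_subset_lineD (by rw [← hFsegY A0 i]; exact hp0 i)
      by_cases ha : a = A0
      · rw [ha]; exact hs0
      · have h0a : A0 < a := by
          rw [Fin.lt_def]
          have hv0 : (A0 : ℕ) = 0 := by rw [hA0]
          rw [hv0]
          rcases Nat.eq_zero_or_pos (a : ℕ) with h0 | h0
          · exact absurd (Fin.ext (by rw [h0, hv0]) : a = A0) ha
          · exact h0
        obtain ⟨q, hq0, hqa⟩ := hmeetY A0 a i i h0a (hdiag i)
        have hline : lineD q (dv i) = lineD (p i) (dv i) := lineD_eq_of_mem (hs0 hq0)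
        rw [hFsegY a i, ← hline]
        exact seg_subset_lineD (by rw [← hFsegY a i]; exact hqa)
    have hclsex : ∀ i : Fin n, ∃ c : Fin n, lineD (p c) (dv c) = lineD (p i) (dv i) ∧
        ∀ j : Fin n, lineD (p j) (dv j) = lineD (p i) (dv i) → c ≤ j := by
      intro i
      have hne : ((Finset.univ : Finset (Fin n)).filter
          (fun j => lineD (p j) (dv j) = lineD (p i) (dv i))).Nonempty := ⟨i, by simp⟩
      refine ⟨((Finset.univ : Finset (Fin n)).filter
          (fun j => lineD (p j) (dv j) = lineD (p i) (dv i))).min' hne, ?_, ?_⟩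
      · exact (Finset.mem_filter.mp (Finset.min'_mem _ hne)).2
      · intro j hj
        exact Finset.min'_le _ j (Finset.mem_filter.mpr ⟨Finset.mem_univ _, hj⟩)
    choose cls hclsL hclsmin using hclsex
    have hclseq : ∀ i j : Fin n, lineD (p i) (dv i) = lineD (p j) (dv j) → cls i = cls j := by
      intro i j h
      apply le_antisymm
      · exact hclsmin i (cls j) ((hclsL j).trans h.symm)
      · exact hclsmin j (cls i) ((hclsL i).trans h)
    have hrepex : ∀ (a : Fin (n + 3)) (i : Fin n), ∃ l r : ℝ, l ≤ r ∧
        F (y a) i = (fun rr : ℝ => rr • dv (cls i) + p (cls i)) '' Set.Icc l r := by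
      intro a i
      have hsub' : (fun rr : ℝ => rr • dv i + vF (y a) i) ''
          Set.Icc (sF (y a) i) (tF (y a) i) ⊆ lineD (p (cls i)) (dv (cls i)) := by
        rw [hclsL i, ← hFsegY a i]
        exact hsub i a
      obtain ⟨l, r, hlr, heq⟩ := seg_on_line (hdv0 (cls i)) (hst (y a) i) hsub'
      exact ⟨l, r, hlr, by rw [hFsegY a i, heq]⟩
    choose la ra hlr hrep using hrepex
    have hTinj : ∀ i : Fin n,
        Function.Injective (fun rr : ℝ => rr • dv (cls i) + p (cls i)) :=
      fun i => lineD_injective_param (hdv0 (cls i)) _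
    have hxex : ∀ i : Fin n, ∃ t0 : ℝ, t0 ∈ Set.Icc (la A0 i) (ra A0 i) ∧
        t0 • dv (cls i) + p (cls i) = p i := by
      intro i
      have h1 := hp0 i
      rw [hrep A0 i] at h1
      obtain ⟨t0, ht0, hval⟩ := h1
      exact ⟨t0, ht0, hval⟩
    choose x hxmem hxval using hxex
    have hx1mem : ∀ i : Fin n, x i ∈ Set.Icc (la A1 i) (ra A1 i) := by
      intro i
      have h1 := hp1 i
      rw [hrep A1 i] at h1
      obtain ⟨t', ht', hval'⟩ := h1
      have e1 : t' • dv (cls i) + p (cls i) = p i := hval'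
      have e2 : t' = x i := by
        apply hTinj i
        show t' • dv (cls i) + p (cls i) = x i • dv (cls i) + p (cls i)
        rw [e1, hxval i]
      rw [← e2]
      exact ht'
    obtain ⟨inc, hincT, hincF⟩ : ∃ inc : Fin n → Bool,
        (∀ i, la A0 i < la A1 i → inc i = true) ∧
        (∀ i, ¬(la A0 i < la A1 i) → inc i = false) :=
      ⟨fun i => if la A0 i < la A1 i then true else false,
        fun i h => if_pos h, fun i h => if_neg h⟩
    obtain ⟨κ, hκ⟩ : ∃ κ : Fin n → Lex ((Fin n) × Lex (Bool × ℝ)),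
        ∀ i, κ i = toLex (cls i, toLex (inc i, cond (inc i) (x i) (-x i))) :=
      ⟨fun i => toLex (cls i, toLex (inc i, cond (inc i) (x i) (-x i))), fun i => rfl⟩
    have hBAD : ∀ i j : Fin n, i ≠ j → cpat i j = false → κ j < κ i := by
      intro i j hij hc
      have hfam : ∀ a : Fin (n + 3), Disjoint (F (y a) i) (F (y a) j) :=
        fun a => hFdisj (y a) i j hij
      obtain ⟨w1, hw1i, hw1j⟩ := hmeetY A0 A1 i j h01 hc
      obtain ⟨w2, hw2i, hw2j⟩ := hmeetY A1 A2 i j h12 hc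
      have hll : lineD (p i) (dv i) = lineD (p j) (dv j) := by
        by_contra hne
        by_cases hw : w1 = w2
        · exact Set.disjoint_left.mp (hfam A1) (hw ▸ hw2i) hw1j
        · exact hne (lineD_eq_lineD (hdv0 i) (hdv0 j) (hsub i A0 hw1i) (hsub j A1 hw1j)
            (hsub i A1 hw2i) (hsub j A2 hw2j) hw)
      have hcc : cls i = cls j := hclseq i j hll
      have hrepj : ∀ a : Fin (n + 3), F (y a) j
          = (fun rr : ℝ => rr • dv (cls i) + p (cls i)) '' Set.Icc (la a j) (ra a j) := by
        intro a
        rw [hcc]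
        exact hrep a j
      have hxj : x j • dv (cls i) + p (cls i) = p j := by rw [hcc]; exact hxval j
      have hpij : p i ≠ p j := by
        intro hpp
        exact Set.disjoint_left.mp (hfam A0) (hp0 i) (hpp ▸ hp0 j)
      have hxij : x i ≠ x j := by
        intro hxx
        apply hpij
        rw [← hxval i, ← hxj, hxx]
      obtain ⟨t1, ht1, ht1v⟩ := (by rw [hrep A0 i] at hw1i; exact hw1i :
        ∃ t1, t1 ∈ Set.Icc (la A0 i) (ra A0 i) ∧ t1 • dv (cls i) + p (cls i) = w1)
      obtain ⟨t2, ht2, ht2v⟩ := (by rw [hrepj A1] at hw1j; exact hw1j :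
        ∃ t2, t2 ∈ Set.Icc (la A1 j) (ra A1 j) ∧ t2 • dv (cls i) + p (cls i) = w1)
      have ht12 : t1 = t2 := by
        apply hTinj i
        show t1 • dv (cls i) + p (cls i) = t2 • dv (cls i) + p (cls i)
        rw [ht1v, ht2v]
      have hIdisj : ∀ a : Fin (n + 3),
          Disjoint (Set.Icc (la a i) (ra a i)) (Set.Icc (la a j) (ra a j)) := by
        intro a
        rw [Set.disjoint_left]
        intro t hti htj
        have hm1 : t • dv (cls i) + p (cls i) ∈ F (y a) i := by
          rw [hrep a i]; exact ⟨t, hti, rfl⟩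
        have hm2 : t • dv (cls i) + p (cls i) ∈ F (y a) j := by
          rw [hrepj a]; exact ⟨t, htj, rfl⟩
        exact Set.disjoint_left.mp (hfam a) hm1 hm2
      rw [hκ j, hκ i]
      rcases lt_or_gt_of_ne hxij with hlt | hgt
      · -- x i < x j : column j has strictly decreasing left endpoints
        have hxmemj : x j ∈ Set.Icc (la A0 j) (ra A0 j) := hxmem j
        have sep0 : ra A0 i < la A0 j := interval_sep (hIdisj A0) (hxmem i) hxmemj hlt
        have hdecj : la A1 j < la A0 j := by
          have hh1 : la A1 j ≤ t2 := ht2.1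
          have hh2 : t1 ≤ ra A0 i := ht1.2
          rw [← ht12] at hh1
          linarith
        have hincj : inc j = false := hincF j (not_lt.mpr hdecj.le)
        apply lex_pair_lt_of_eq hcc.symm
        rcases Bool.eq_false_or_eq_true (inc i) with hii | hii
        · rw [hincj, hii]
          exact lex_pair_lt_of_lt (by decide)
        · rw [hincj, hii]
          simp only [Bool.cond_false]
          exact lex_pair_lt_of_eq rfl (neg_lt_neg hlt)
      · -- x j < x i : column i has strictly increasing left endpoints
        have sep1 : ra A1 j < la A1 i :=
          interval_sep (hIdisj A1).symm (hx1mem j) (hx1mem i) hgt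
        have hinci_lt : la A0 i < la A1 i := by
          have hh1 : la A0 i ≤ t1 := ht1.1
          have hh2 : t2 ≤ ra A1 j := ht2.2
          rw [← ht12] at hh2
          linarith
        have hinci : inc i = true := hincT i hinci_lt
        apply lex_pair_lt_of_eq hcc.symm
        rcases Bool.eq_false_or_eq_true (inc j) with hjj | hjj
        · rw [hjj, hinci]
          simp only [Bool.cond_true]
          exact lex_pair_lt_of_eq rfl hgt
        · rw [hjj, hinci]
          exact lex_pair_lt_of_lt (by decide)
    set σ := Tuple.sort κ with hσ
    have hmono : Monotone (κ ∘ σ) := Tuple.monotone_sort κ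
    have hforward : ∀ a b : Fin n, a < b → cpat (σ a) (σ b) = true := by
      intro a b hab
      rcases Bool.eq_false_or_eq_true (cpat (σ a) (σ b)) with h | h
      · exact h
      · exfalso
        have hne : σ a ≠ σ b := fun hh => hab.ne (σ.injective hh)
        exact absurd (hmono hab.le) (not_le.mpr (hBAD _ _ hne h))
    refine ⟨fun a => y (Fin.castLE hnm a), fun a => σ a, ?_, ?_⟩
    · intro a b hab
      exact Fin.castLE_injective hnm (hyinj hab)
    · intro j j' hjj'
      rcases lt_or_gt_of_ne hjj' with h | h
      · exact hdisjY _ _ _ _ (hcastlt h) (hforward j j' h)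
      · exact (hdisjY _ _ _ _ (hcastlt h) (hforward j' j h)).symm


end

/-- Theorem 1.1: for all `n, k` there is `N` such that any `N` families, each of `n`
pairwise disjoint line segments whose directions lie in a fixed set `U` of `k`
direction vectors, have an SDR of size `n`. -/
theorem stmt_6 (n k : ℕ) (hn : 0 < n) (hk : 0 < k) :
    ∃ N : ℕ, 0 < N ∧
      ∀ U : Finset (ℝ × ℝ), U.card = k → (∀ u ∈ U, u ≠ 0) →
        ∀ F : Fin N → Fin n → Set (ℝ × ℝ),
          (∀ x b, ∃ u ∈ U, ∃ v : ℝ × ℝ, ∃ s t : ℝ, s ≤ t ∧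
              F x b = (fun r : ℝ => r • u + v) '' Set.Icc s t) →
          (∀ x, ∀ b b', b ≠ b' → Disjoint (F x b) (F x b')) →
          ∃ (P : Fin n → Fin N) (g : Fin n → Fin n),
            Function.Injective P ∧
            ∀ j j' : Fin n, j ≠ j' → Disjoint (F (P j) (g j)) (F (P j') (g j')) := by
  refine ⟨k ^ n * (Fintype.card (Fin n → Fin n → Bool) + 1) ^
      (Fintype.card (Fin n → Fin n → Bool) * (n + 3) + 1), ?_, ?_⟩
  · exact Nat.mul_pos (pow_pos hk n) (pow_pos (by omega) _)
  · intro U hU hUne F hFs hFdisj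
    exact sdr_aux n k hn hk _ le_rfl U hU hUne F hFs hFdisj
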